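/- Let G and G* be finite weighted graphs that coincide except for a single edge e = {v1,v2} (e may be present in exactly one of the two graphs, or present in both with different weights; all other vertices, edges and weights agree, and v1, v2 are vertices of both graphs). Let L > 0. If p is a shortest path in G between vertices u and w of length at most L that contains at least one vertex lying outside B_G(v1,2L) ∪ B_G(v2,2L), then p is also a shortest path in G* between u and w, of the same length. -/
import Mathlib


open SimpleGraph

/-- The length (total weight) of a walk under an edge-weight function `w`. -/
noncomputable def wlen {V : Type*} {G : SimpleGraph V} (w : Sym2 V → ℝ) {u v : V}
    (p : G.Walk u v) : ℝ :=
  (p.edges.map w).sum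

/-- Shortest-path distance as the infimum of walk lengths. -/
noncomputable def wdist {V : Type*} (G : SimpleGraph V) (w : Sym2 V → ℝ) (u v : V) : ℝ :=
  sInf {x : ℝ | ∃ p : G.Walk u v, x = wlen w p}

lemma wlen_nonneg {V : Type*} {G : SimpleGraph V} {w : Sym2 V → ℝ}
    (hw : ∀ e ∈ G.edgeSet, 0 ≤ w e) {a b : V} (p : G.Walk a b) : 0 ≤ wlen w p := by
  apply List.sum_nonneg
  intro t ht
  obtain ⟨e, he, rfl⟩ := List.mem_map.mp ht
  exact hw e (p.edges_subset_edgeSet he)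

lemma wdist_le {V : Type*} {G : SimpleGraph V} {w : Sym2 V → ℝ}
    (hw : ∀ e ∈ G.edgeSet, 0 ≤ w e) {a b : V} (r : G.Walk a b) :
    wdist G w a b ≤ wlen w r := by
  apply csInf_le
  · exact ⟨0, fun t ht => by obtain ⟨r', rfl⟩ := ht; exact wlen_nonneg hw r'⟩
  · exact ⟨r, rfl⟩

lemma wlen_append {V : Type*} {G : SimpleGraph V} {w : Sym2 V → ℝ} {a b c : V}
    (p : G.Walk a b) (q : G.Walk b c) :
    wlen w (p.append q) = wlen w p + wlen w q := by
  simp [wlen, SimpleGraph.Walk.edges_append]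

lemma wlen_reverse {V : Type*} {G : SimpleGraph V} {w : Sym2 V → ℝ} {a b : V}
    (p : G.Walk a b) : wlen w p.reverse = wlen w p := by
  simp [wlen, SimpleGraph.Walk.edges_reverse, List.sum_reverse]

lemma wlen_takeUntil_le {V : Type*} [DecidableEq V] {G : SimpleGraph V} {w : Sym2 V → ℝ}
    (hw : ∀ e ∈ G.edgeSet, 0 ≤ w e) {a b : V} (p : G.Walk a b) {c : V}
    (hc : c ∈ p.support) : wlen w (p.takeUntil c hc) ≤ wlen w p := by
  have := SimpleGraph.Walk.take_spec p hc
  calc wlen w (p.takeUntil c hc)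
      ≤ wlen w (p.takeUntil c hc) + wlen w (p.dropUntil c hc) := by
        have := wlen_nonneg hw (p.dropUntil c hc); linarith
    _ = wlen w ((p.takeUntil c hc).append (p.dropUntil c hc)) := (wlen_append _ _).symm
    _ = wlen w p := by rw [SimpleGraph.Walk.take_spec]

lemma exists_prefix {V : Type*} {Gs : SimpleGraph V} {ws : Sym2 V → ℝ}
    (hwsnn : ∀ e ∈ Gs.edgeSet, 0 ≤ ws e) (v1 v2 : V)
    {a x : V} (q : Gs.Walk a x) (hq : s(v1, v2) ∈ q.edges) :
    ∃ (z : V), (z = v1 ∨ z = v2) ∧ ∃ q1 : Gs.Walk a z,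
      s(v1, v2) ∉ q1.edges ∧ wlen ws q1 ≤ wlen ws q := by
  induction q with
  | nil => simp at hq
  | @cons a b x h q' ih =>
    by_cases hA : a = v1 ∨ a = v2
    · refine ⟨a, hA, SimpleGraph.Walk.nil, by simp, ?_⟩
      have h0 : wlen ws (SimpleGraph.Walk.nil : Gs.Walk a a) = 0 := by simp [wlen]
      rw [h0]
      exact wlen_nonneg hwsnn _
    · push_neg at hA
      have hne : s(a, b) ≠ s(v1, v2) := by
        intro hcontra
        rcases Sym2.eq_iff.mp hcontra with ⟨h1, _⟩ | ⟨h1, _⟩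
        · exact hA.1 h1
        · exact hA.2 h1
      have hmem : s(v1, v2) ∈ q'.edges := by
        have hq' : s(v1, v2) ∈ s(a, b) :: q'.edges := SimpleGraph.Walk.edges_cons h q' ▸ hq
        rcases List.mem_cons.mp hq' with h' | h'
        · exact absurd h'.symm hne
        · exact h'
      obtain ⟨z, hz, q1', havoid, hle⟩ := ih hmem
      refine ⟨z, hz, SimpleGraph.Walk.cons h q1', ?_, ?_⟩
      · simp only [SimpleGraph.Walk.edges_cons, List.mem_cons]
        rintro (h' | h')
        · exact hne h'.symm
        · exact havoid h'
      · simp only [wlen, SimpleGraph.Walk.edges_cons, List.map_cons, List.sum_cons]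
        have : wlen ws q1' ≤ wlen ws q' := hle
        simp only [wlen] at this
        linarith

/-- A shortest path of `G` of length at most `L` containing a
vertex outside `B_G(v1,2L) ∪ B_G(v2,2L)` is also a shortest path, of the same
length, in the graph `G*` obtained by changing only the edge `{v1,v2}`. -/
theorem stmt15 {V : Type} [Fintype V]
    (G Gs : SimpleGraph V) (w ws : Sym2 V → ℝ)
    (hGconn : G.Connected) (hGsconn : Gs.Connected)
    (hwpos : ∀ e ∈ G.edgeSet, 0 < w e) (hwspos : ∀ e ∈ Gs.edgeSet, 0 < ws e)
    (huniqG : ∀ (a b : V) (p q : G.Walk a b), p.IsPath → q.IsPath →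
      (∀ z : G.Walk a b, wlen w p ≤ wlen w z) →
      (∀ z : G.Walk a b, wlen w q ≤ wlen w z) → p = q)
    (huniqGs : ∀ (a b : V) (p q : Gs.Walk a b), p.IsPath → q.IsPath →
      (∀ z : Gs.Walk a b, wlen ws p ≤ wlen ws z) →
      (∀ z : Gs.Walk a b, wlen ws q ≤ wlen ws z) → p = q)
    (v1 v2 : V)
    (hsame : ∀ a b : V, s(a, b) ≠ s(v1, v2) →
      ((G.Adj a b ↔ Gs.Adj a b) ∧ w s(a, b) = ws s(a, b)))
    (L : ℝ) (hL : 0 < L)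
    (u x : V) (p : G.Walk u x) (hp : p.IsPath)
    (hpshort : ∀ q : G.Walk u x, wlen w p ≤ wlen w q)
    (hplen : wlen w p ≤ L)
    (hout : ∃ y ∈ p.support,
      y ∉ {z : V | wdist G w v1 z ≤ 2 * L} ∪ {z : V | wdist G w v2 z ≤ 2 * L}) :
    ∃ hedges : ∀ e ∈ p.edges, e ∈ Gs.edgeSet,
      wlen ws (p.transfer Gs hedges) = wlen w p ∧
      ∀ q : Gs.Walk u x, wlen ws (p.transfer Gs hedges) ≤ wlen ws q := by
  classical
  have hwnn : ∀ e ∈ G.edgeSet, 0 ≤ w e := fun e he => le_of_lt (hwpos e he)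
  have hwsnn : ∀ e ∈ Gs.edgeSet, 0 ≤ ws e := fun e he => le_of_lt (hwspos e he)
  obtain ⟨y, hy, hynot⟩ := hout
  simp only [Set.mem_union, Set.mem_setOf_eq, not_or, not_le] at hynot
  obtain ⟨hy1, hy2⟩ := hynot
  -- transfer lemmas
  have hGtoGs : ∀ e : Sym2 V, e ≠ s(v1, v2) → e ∈ G.edgeSet → e ∈ Gs.edgeSet ∧ w e = ws e := by
    intro e
    induction e using Sym2.ind with
    | _ a b =>
      intro hne hG
      exact ⟨(hsame a b hne).1.mp hG, (hsame a b hne).2⟩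
  have hGstoG : ∀ e : Sym2 V, e ≠ s(v1, v2) → e ∈ Gs.edgeSet → e ∈ G.edgeSet ∧ w e = ws e := by
    intro e
    induction e using Sym2.ind with
    | _ a b =>
      intro hne hGs
      exact ⟨(hsame a b hne).1.mpr hGs, (hsame a b hne).2⟩
  -- distance from u to y along p
  have hduy : wlen w (p.takeUntil y hy) ≤ L :=
    le_trans (wlen_takeUntil_le hwnn p hy) hplen
  -- p avoids the edge s(v1,v2)
  have henotp : s(v1, v2) ∉ p.edges := by
    intro hmem
    have hv1 : v1 ∈ p.support := SimpleGraph.Walk.fst_mem_support_of_mem_edges p hmem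
    have hr : wdist G w v1 y ≤ wlen w ((p.takeUntil v1 hv1).reverse.append (p.takeUntil y hy)) :=
      wdist_le hwnn _
    rw [wlen_append, wlen_reverse] at hr
    have h1 : wlen w (p.takeUntil v1 hv1) ≤ L :=
      le_trans (wlen_takeUntil_le hwnn p hv1) hplen
    linarith
  have hedges : ∀ e ∈ p.edges, e ∈ Gs.edgeSet := by
    intro e he
    have hne : e ≠ s(v1, v2) := fun h => henotp (h ▸ he)
    exact (hGtoGs e hne (p.edges_subset_edgeSet he)).1
  refine ⟨hedges, ?_, ?_⟩
  · -- lengths equal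
    simp only [wlen, SimpleGraph.Walk.edges_transfer]
    apply congrArg
    apply List.map_congr_left
    intro e he
    have hne : e ≠ s(v1, v2) := fun h => henotp (h ▸ he)
    exact ((hGtoGs e hne (p.edges_subset_edgeSet he)).2).symm
  · intro q
    have hwt : wlen ws (p.transfer Gs hedges) = wlen w p := by
      simp only [wlen, SimpleGraph.Walk.edges_transfer]
      apply congrArg
      apply List.map_congr_left
      intro e he
      have hne : e ≠ s(v1, v2) := fun h => henotp (h ▸ he)
      exact ((hGtoGs e hne (p.edges_subset_edgeSet he)).2).symm
    rw [hwt]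
    by_cases hq : s(v1, v2) ∈ q.edges
    · -- q goes through the changed edge, hence reaches v1 or v2, so it is long
      obtain ⟨z, hz, q1, havoid, hle⟩ := exists_prefix hwsnn v1 v2 q hq
      have hq1G : ∀ e ∈ q1.edges, e ∈ G.edgeSet := by
        intro e he
        have hne : e ≠ s(v1, v2) := fun h => havoid (h ▸ he)
        exact (hGstoG e hne (q1.edges_subset_edgeSet he)).1
      have hq1len : wlen w (q1.transfer G hq1G) = wlen ws q1 := by
        simp only [wlen, SimpleGraph.Walk.edges_transfer]
        apply congrArg
        apply List.map_congr_left
        intro e he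
        have hne : e ≠ s(v1, v2) := fun h => havoid (h ▸ he)
        exact (hGstoG e hne (q1.edges_subset_edgeSet he)).2
      have hr : wdist G w z y ≤
          wlen w ((q1.transfer G hq1G).reverse.append (p.takeUntil y hy)) :=
        wdist_le hwnn _
      rw [wlen_append, wlen_reverse, hq1len] at hr
      have hzy : 2 * L < wdist G w z y := by
        rcases hz with rfl | rfl
        · exact hy1
        · exact hy2
      linarith
    · -- q avoids the changed edge : transfer to G
      have hqG : ∀ e ∈ q.edges, e ∈ G.edgeSet := by
        intro e he
        have hne : e ≠ s(v1, v2) := fun h => hq (h ▸ he)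
        exact (hGstoG e hne (q.edges_subset_edgeSet he)).1
      have hqlen : wlen w (q.transfer G hqG) = wlen ws q := by
        simp only [wlen, SimpleGraph.Walk.edges_transfer]
        apply congrArg
        apply List.map_congr_left
        intro e he
        have hne : e ≠ s(v1, v2) := fun h => hq (h ▸ he)
        exact (hGstoG e hne (q.edges_subset_edgeSet he)).2
      calc wlen w p ≤ wlen w (q.transfer G hqG) := hpshort _
        _ = wlen ws q := hqlen
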